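/- For any positive integers m, n, p, q with nq > mp, the triangle with side lengths a = mn(p² + q²), b = pq(m² + n²), c = pq(n² − m²) + mn(q² − p²) (assuming all are positive and satisfy the triangle inequality) has area equal to mnpq(mq + np)(nq − mp), which is an integer; in particular it is a Heron triangle. -/

import Mathlib

/-- Schubert's parameterization of Heron triangles: for positive integers
`m n p q` with `nq > mp`, the triangle with sides `a = mn(p²+q²)`,
`b = pq(m²+n²)`, `c = pq(n²−m²) + mn(q²−p²)` (assumed positive and satisfying
the triangle inequality) has Heron area equal to the integer
`mnpq(mq+np)(nq−mp)`. -/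
theorem heron_parameterization (m n p q : ℤ)
    (hm : 0 < m) (hn : 0 < n) (hp : 0 < p) (hq : 0 < q)
    (hlt : m * p < n * q)
    (a b c : ℤ)
    (hA : a = m * n * (p ^ 2 + q ^ 2))
    (hB : b = p * q * (m ^ 2 + n ^ 2))
    (hC : c = p * q * (n ^ 2 - m ^ 2) + m * n * (q ^ 2 - p ^ 2))
    (hapos : 0 < a) (hbpos : 0 < b) (hcpos : 0 < c)
    (htri1 : a < b + c) (htri2 : b < a + c) (htri3 : c < a + b) :
    (1 / 4 : ℝ) * Real.sqrt (((a + b + c) * (-a + b + c) * (a - b + c) * (a + b - c) : ℤ)) =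
      ((m * n * p * q * (m * q + n * p) * (n * q - m * p) : ℤ) : ℝ) := by
  have hK : (0 : ℤ) ≤ m * n * p * q * (m * q + n * p) * (n * q - m * p) := by
    have h1 : (0:ℤ) ≤ n * q - m * p := by linarith
    have h2 : (0:ℤ) < m * n * p * q * (m * q + n * p) := by positivity
    positivity
  have hid : ((a + b + c) * (-a + b + c) * (a - b + c) * (a + b - c) : ℤ) =
      (4 * (m * n * p * q * (m * q + n * p) * (n * q - m * p))) ^ 2 := by
    subst hA hB hC; ring
  rw [hid]
  push_cast
  rw [Real.sqrt_sq (by exact mul_nonneg (by norm_num) (by exact_mod_cast hK))]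
  ring
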